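/- Let f : X → Y be a continuous open surjection between quasi-Polish spaces. Then for every countable ordinal ξ ≥ 1, a set B ⊆ Y is Σ⁰_ξ if and only if f⁻¹(B) ⊆ X is Σ⁰_ξ. -/

import Mathlib

open Set

/-- A `Π⁰₂` set: a countable intersection of sets `(U ⇒ V) = Uᶜ ∪ V` with `U, V` open. -/
def IsPi02 {X : Type*} [TopologicalSpace X] (A : Set X) : Prop :=
  ∃ U V : ℕ → Set X, (∀ n, IsOpen (U n)) ∧ (∀ n, IsOpen (V n)) ∧
    A = ⋂ n, ((U n)ᶜ ∪ V n)

/-- A quasi-Polish space: homeomorphic (via an embedding) to a `Π⁰₂` subspace of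
the countable power `ℕ → Prop` of the Sierpiński space. -/
def QuasiPolish (X : Type*) [TopologicalSpace X] : Prop :=
  ∃ f : X → (ℕ → Prop), Topology.IsEmbedding f ∧ IsPi02 (Set.range f)

/-- Selivanov's Borel hierarchy: `Σ⁰₁` = open sets, and for `ξ ≥ 2`,
`Σ⁰_ξ` consists of countable unions `⋃ n, U n \ V n` with `U n, V n ∈ Σ⁰_{ζ n}`,
`ζ n < ξ`. -/
inductive SelSigma {X : Type*} [TopologicalSpace X] : Ordinal.{0} → Set X → Prop
  | base {U : Set X} (hU : IsOpen U) : SelSigma 1 U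
  | step {ξ : Ordinal.{0}} (hξ : 2 ≤ ξ) (ζ : ℕ → Ordinal.{0}) (hζ : ∀ n, ζ n < ξ)
      (U V : ℕ → Set X) (hU : ∀ n, SelSigma (ζ n) (U n)) (hV : ∀ n, SelSigma (ζ n) (V n)) :
      SelSigma ξ (⋃ n, U n \ V n)

open Topology TopologicalSpace

namespace QP

/-! ### Sierpiński space facts -/

instance : T0Space Prop := by
  refine t0Space_iff_inseparable Prop |>.mpr fun p q h => ?_
  have h1 := (inseparable_iff_forall_isOpen.mp h) {True} isOpen_singleton_true
  simp only [mem_singleton_iff] at h1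
  by_cases hp : p
  · have : p = True := eq_true hp
    exact this.trans (h1.mp this).symm
  · by_cases hq : q
    · exact absurd (h1.mpr (eq_true hq)) (by simp [hp])
    · simp [eq_false hp, eq_false hq]

lemma prop_open_upward {o : Set Prop} (ho : IsOpen o) {p q : Prop} (hp : p ∈ o) (hpq : p → q) :
    q ∈ o := by
  have h : TopologicalSpace.GenerateOpen {{True}} o := ho
  clear ho
  induction h with
  | basic s hs =>
      rw [mem_singleton_iff] at hs; subst hs
      rw [mem_singleton_iff] at hp ⊢
      exact eq_true (hpq (of_eq_true hp))
  | univ => trivial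
  | inter s t _ _ ihs iht => exact ⟨ihs hp.1, iht hp.2⟩
  | sUnion S _ ih =>
      obtain ⟨s, hsS, hps⟩ := hp; exact ⟨s, hsS, ih s hsS hps⟩

/-- Cylinder: points of `ℕ → Prop` whose value is true on all of `F`. -/
def cyl (F : Finset ℕ) : Set (ℕ → Prop) := {x | ∀ i ∈ F, x i}

lemma isOpen_coord (i : ℕ) : IsOpen {x : ℕ → Prop | x i} := by
  have h : {x : ℕ → Prop | x i} = (fun x : ℕ → Prop => x i) ⁻¹' {True} := by
    ext x; simp
  rw [h]; exact isOpen_singleton_true.preimage (continuous_apply i)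

lemma isOpen_cyl (F : Finset ℕ) : IsOpen (cyl F) := by
  have : cyl F = ⋂ i ∈ F, {x : ℕ → Prop | x i} := by
    ext x; simp [cyl]
  rw [this]
  exact isOpen_biInter_finset fun i _ => isOpen_coord i

lemma cyl_anti {F F' : Finset ℕ} (h : F ⊆ F') : cyl F' ⊆ cyl F :=
  fun _x hx i hi => hx i (h hi)

lemma exists_cyl_subset {G : Set (ℕ → Prop)} (hG : IsOpen G) {x : ℕ → Prop} (hx : x ∈ G) :
    ∃ F : Finset ℕ, (∀ i ∈ F, x i) ∧ cyl F ⊆ G := by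
  classical
  obtain ⟨I, u, hu, hsub⟩ := isOpen_pi_iff.mp hG x hx
  refine ⟨I.filter (fun i => x i), fun i hi => (Finset.mem_filter.mp hi).2, fun z hz => ?_⟩
  apply hsub
  intro i hi
  refine prop_open_upward (hu i hi).1 (hu i hi).2 fun hxi => ?_
  exact hz i (Finset.mem_filter.mpr ⟨hi, hxi⟩)

end QP

namespace QP

theorem baireSpace_of_isPi02 {A : Set (ℕ → Prop)} (hA : IsPi02 A) : BaireSpace ↥A := by
  classical
  obtain ⟨U, V, hUo, hVo, hAeq⟩ := hA
  constructor
  intro g hgo hgd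
  -- choose ambient open sets for the dense open sets
  have hg : ∀ n, ∃ G : Set (ℕ → Prop), IsOpen G ∧ Subtype.val ⁻¹' G = g n := by
    intro n
    exact (IsInducing.subtypeVal.isOpen_iff).mp (hgo n)
  choose G hGo hGp using hg
  rw [dense_iff_inter_open]
  rintro O hO ⟨⟨x₀, hx₀A⟩, hx₀O⟩
  obtain ⟨G₀, hG₀o, hG₀p⟩ := (IsInducing.subtypeVal.isOpen_iff).mp hO
  have hx₀G : x₀ ∈ G₀ := by rw [← hG₀p] at hx₀O; exact hx₀O
  obtain ⟨F₀, hF₀x, hF₀G⟩ := exists_cyl_subset hG₀o hx₀G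
  -- the recursive step
  have key : ∀ (k : ℕ) (x : ℕ → Prop) (F : Finset ℕ), x ∈ A → (∀ i ∈ F, x i) →
      ∃ (x' : ℕ → Prop) (F' : Finset ℕ), x' ∈ A ∧ (∀ i ∈ F', x' i) ∧ F ⊆ F' ∧
        cyl F' ⊆ G k ∧ (x' ∈ U (Nat.unpair k).1 → cyl F' ⊆ V (Nat.unpair k).1) := by
    intro k x F hxA hxF
    have hopen : IsOpen (Subtype.val ⁻¹' cyl F : Set ↥A) :=
      (isOpen_cyl F).preimage continuous_subtype_val
    have hne : (Subtype.val ⁻¹' cyl F : Set ↥A).Nonempty := ⟨⟨x, hxA⟩, hxF⟩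
    obtain ⟨⟨x', hx'A⟩, hx'cyl, hx'g⟩ := (hgd k).inter_open_nonempty _ hopen hne
    have hx'G : x' ∈ G k := by rw [← hGp k] at hx'g; exact hx'g
    have hx'F : ∀ i ∈ F, x' i := hx'cyl
    obtain ⟨F₁, hF₁x, hF₁G⟩ := exists_cyl_subset (hGo k) hx'G
    set n := (Nat.unpair k).1 with hn
    by_cases hxU : x' ∈ U n
    · have hxV : x' ∈ V n := by
        have := hAeq ▸ hx'A
        have h2 := mem_iInter.mp this n
        rcases h2 with h2 | h2
        · exact absurd hxU h2
        · exact h2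
      obtain ⟨F₂, hF₂x, hF₂V⟩ := exists_cyl_subset (hVo n) hxV
      refine ⟨x', F ∪ F₁ ∪ F₂, hx'A, ?_, ?_, ?_, fun _ => ?_⟩
      · intro i hi
        rcases Finset.mem_union.mp hi with hi | hi
        · rcases Finset.mem_union.mp hi with hi | hi
          · exact hx'F i hi
          · exact hF₁x i hi
        · exact hF₂x i hi
      · exact (Finset.subset_union_left).trans Finset.subset_union_left
      · exact (cyl_anti ((Finset.subset_union_right).trans Finset.subset_union_left)).trans hF₁G
      · exact (cyl_anti Finset.subset_union_right).trans hF₂V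
    · refine ⟨x', F ∪ F₁, hx'A, ?_, Finset.subset_union_left, ?_, fun h => absurd h hxU⟩
      · intro i hi
        rcases Finset.mem_union.mp hi with hi | hi
        · exact hx'F i hi
        · exact hF₁x i hi
      · exact (cyl_anti Finset.subset_union_right).trans hF₁G
  choose x' F' hA' hF' hsub' hG' hV' using key
  -- the recursively defined sequence of (point, finite set) pairs
  let St := {p : (ℕ → Prop) × Finset ℕ // p.1 ∈ A ∧ ∀ i ∈ p.2, p.1 i}
  let step : ℕ → St → St := fun k s =>
    ⟨(x' k s.1.1 s.1.2 s.2.1 s.2.2, F' k s.1.1 s.1.2 s.2.1 s.2.2),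
      hA' k s.1.1 s.1.2 s.2.1 s.2.2, hF' k s.1.1 s.1.2 s.2.1 s.2.2⟩
  let seq : ℕ → St := fun k => Nat.rec (⟨(x₀, F₀), hx₀A, hF₀x⟩ : St) step k
  have seq_succ : ∀ k, seq (k + 1) = step k (seq k) := fun k => rfl
  set Fs : ℕ → Finset ℕ := fun k => (seq k).1.2 with hFs
  have Fmono : ∀ k, Fs k ⊆ Fs (k + 1) := fun k =>
    hsub' k (seq k).1.1 (seq k).1.2 (seq k).2.1 (seq k).2.2
  have Fle : ∀ {k l}, k ≤ l → Fs k ⊆ Fs l := by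
    intro k l h
    induction l with
    | zero => rw [Nat.le_zero.mp h]
    | succ m ih =>
        rcases Nat.lt_or_ge k (m+1) with h' | h'
        · exact (ih (Nat.lt_succ_iff.mp h')).trans (Fmono m)
        · rw [Nat.le_antisymm h h']
  have cylG : ∀ k, cyl (Fs (k + 1)) ⊆ G k := fun k =>
    hG' k (seq k).1.1 (seq k).1.2 (seq k).2.1 (seq k).2.2
  have hUV : ∀ k, (seq (k+1)).1.1 ∈ U (Nat.unpair k).1 →
      cyl (Fs (k + 1)) ⊆ V (Nat.unpair k).1 := fun k =>
    hV' k (seq k).1.1 (seq k).1.2 (seq k).2.1 (seq k).2.2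
  have hFpt : ∀ k, ∀ i ∈ Fs k, (seq k).1.1 i := fun k => (seq k).2.2
  -- the limit point
  set z : ℕ → Prop := fun i => ∃ k, i ∈ Fs k with hz
  have hzcyl : ∀ k, z ∈ cyl (Fs k) := fun k i hi => ⟨k, hi⟩
  have hzA : z ∈ A := by
    rw [hAeq, mem_iInter]
    intro n
    by_cases hzU : z ∈ U n
    · right
      obtain ⟨Fst, hFstz, hFstU⟩ := exists_cyl_subset (hUo n) hzU
      -- find a stage containing Fst
      have : ∃ k₀, ∀ i ∈ Fst, i ∈ Fs k₀ := by
        have h1 : ∀ i ∈ Fst, ∃ k, i ∈ Fs k := fun i hi => hFstz i hi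
        choose κ hκ using h1
        refine ⟨Fst.sup fun i => if h : i ∈ Fst then κ i h else 0, fun i hi => ?_⟩
        exact Fle (by
          have := Finset.le_sup (f := fun i => if h : i ∈ Fst then κ i h else 0) hi
          simpa [hi] using this) (hκ i hi)
      obtain ⟨k₀, hk₀⟩ := this
      set k := Nat.pair n k₀ with hk
      have hk₀k : k₀ ≤ k := Nat.right_le_pair n k₀
      have hxk : (seq (k+1)).1.1 ∈ U n := by
        apply hFstU
        intro i hi
        exact hFpt (k+1) i (Fle (Nat.le_succ_of_le hk₀k) (hk₀ i hi))
      have := hUV k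
      rw [Nat.unpair_pair] at this
      exact this hxk (hzcyl (k+1))
    · left; exact hzU
  refine ⟨⟨z, hzA⟩, ?_, ?_⟩
  · rw [← hG₀p]
    exact hF₀G ((cyl_anti (Fle (Nat.zero_le 0))).trans (fun _ h => h) (hzcyl 0))
  · rw [mem_iInter]
    intro k
    rw [← hGp k]
    exact cylG k (hzcyl (k+1))

end QP

namespace QP

lemma dense_preimage_homeomorph {W Z : Type*} [TopologicalSpace W] [TopologicalSpace Z]
    (h : W ≃ₜ Z) {s : Set Z} (hs : Dense s) : Dense (h ⁻¹' s) := by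
  rw [dense_iff_closure_eq] at hs ⊢
  rw [← Homeomorph.preimage_closure, hs, preimage_univ]

lemma baireSpace_of_homeomorph {W Z : Type*} [TopologicalSpace W] [TopologicalSpace Z]
    (h : W ≃ₜ Z) [BaireSpace W] : BaireSpace Z := by
  constructor
  intro g hgo hgd
  have hd : Dense (⋂ n, h ⁻¹' g n) :=
    dense_iInter_of_isOpen_nat (fun n => (hgo n).preimage h.continuous)
      (fun n => dense_preimage_homeomorph h (hgd n))
  rw [← preimage_iInter] at hd
  have := dense_preimage_homeomorph h.symm hd
  rwa [← preimage_comp, show (⇑h ∘ ⇑h.symm) = id from funext h.apply_symm_apply,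
    preimage_id] at this

theorem QuasiPolish.baireSpace {Z : Type*} [TopologicalSpace Z] (h : QuasiPolish Z) :
    BaireSpace Z := by
  obtain ⟨e, he, hPi⟩ := h
  haveI := baireSpace_of_isPi02 hPi
  exact baireSpace_of_homeomorph (Topology.IsEmbedding.toHomeomorph he).symm

theorem QuasiPolish.secondCountable {Z : Type*} [TopologicalSpace Z] (h : QuasiPolish Z) :
    SecondCountableTopology Z := by
  obtain ⟨e, he, -⟩ := h
  exact he.secondCountableTopology

theorem QuasiPolish.t0 {Z : Type*} [TopologicalSpace Z] (h : QuasiPolish Z) : T0Space Z := by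
  obtain ⟨e, he, -⟩ := h
  exact he.t0Space

end QP

namespace QP

lemma isPi02_iInter {Z : Type*} [TopologicalSpace Z] {A : ℕ → Set Z}
    (h : ∀ n, IsPi02 (A n)) : IsPi02 (⋂ n, A n) := by
  choose U V hU hV hEq using h
  refine ⟨fun k => U (Nat.unpair k).1 (Nat.unpair k).2,
    fun k => V (Nat.unpair k).1 (Nat.unpair k).2,
    fun k => hU _ _, fun k => hV _ _, ?_⟩
  ext z
  simp only [mem_iInter]
  constructor
  · intro hz k
    have := hz (Nat.unpair k).1
    rw [hEq] at this
    exact mem_iInter.mp this (Nat.unpair k).2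
  · intro hz n
    rw [hEq, mem_iInter]
    intro m
    have := hz (Nat.pair n m)
    rwa [Nat.unpair_pair] at this

lemma isPi02_inter {Z : Type*} [TopologicalSpace Z] {A B : Set Z}
    (hA : IsPi02 A) (hB : IsPi02 B) : IsPi02 (A ∩ B) := by
  have : A ∩ B = ⋂ n, (if n = 0 then A else B) := by
    apply subset_antisymm
    · intro z hz
      rw [mem_iInter]; intro n
      by_cases h : n = 0 <;> simp [h, hz.1, hz.2]
    · intro z hz
      have h0 := mem_iInter.mp hz 0
      have h1 := mem_iInter.mp hz 1
      simp at h0 h1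
      exact ⟨h0, h1⟩
  rw [this]
  apply isPi02_iInter
  intro n
  by_cases h : n = 0 <;> simp [h, hA, hB]

lemma isPi02_preimage {Z W : Type*} [TopologicalSpace Z] [TopologicalSpace W]
    {g : Z → W} (hg : Continuous g) {B : Set W} (hB : IsPi02 B) : IsPi02 (g ⁻¹' B) := by
  obtain ⟨U, V, hU, hV, hEq⟩ := hB
  refine ⟨fun n => g ⁻¹' U n, fun n => g ⁻¹' V n, fun n => (hU n).preimage hg,
    fun n => (hV n).preimage hg, ?_⟩
  rw [hEq]
  simp [preimage_iInter, preimage_union, preimage_compl]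

/-- In a second-countable T0 space, singletons are `Π⁰₂`. -/
lemma isPi02_singleton {Z : Type*} [TopologicalSpace Z] [SecondCountableTopology Z]
    [T0Space Z] (y : Z) : IsPi02 ({y} : Set Z) := by
  classical
  obtain ⟨b, hbc, -, hbasis⟩ := exists_countable_basis Z
  obtain ⟨Bf, hBf⟩ := (hbc.insert ∅).exists_eq_range (insert_nonempty _ _)
  have hBopen : ∀ n, IsOpen (Bf n) := by
    intro n
    have : Bf n ∈ insert ∅ b := hBf ▸ mem_range_self n
    rcases this with h | h
    · rw [h]; exact isOpen_empty
    · exact hbasis.isOpen h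
  refine ⟨fun n => if y ∈ Bf n then univ else Bf n,
    fun n => if y ∈ Bf n then Bf n else ∅,
    fun n => by by_cases h : y ∈ Bf n <;> simp [h, hBopen n],
    fun n => by by_cases h : y ∈ Bf n <;> simp [h, hBopen n], ?_⟩
  apply subset_antisymm
  · intro z hz
    rw [mem_singleton_iff] at hz
    rw [mem_iInter]; intro n
    rw [hz]
    by_cases h : y ∈ Bf n <;> simp [h]
  · intro z hz
    rw [mem_iInter] at hz
    rw [mem_singleton_iff]
    symm
    apply Inseparable.eq
    rw [inseparable_iff_forall_isOpen]
    intro s hs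
    constructor
    · intro hys
      obtain ⟨t, htb, hyt, hts⟩ := hbasis.exists_subset_of_mem_open hys hs
      have htr : t ∈ range Bf := by rw [← hBf]; exact mem_insert_of_mem _ htb
      obtain ⟨n, hn⟩ := htr
      have hyB : y ∈ Bf n := by rw [hn]; exact hyt
      have h2 := hz n
      simp only [hyB, if_true] at h2
      have h3 : z ∈ Bf n := by
        rcases h2 with h2 | h2
        · exact absurd (mem_univ z) h2
        · exact h2
      exact hts (hn ▸ h3)
    · intro hzs
      obtain ⟨t, htb, hzt, hts⟩ := hbasis.exists_subset_of_mem_open hzs hs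
      have htr : t ∈ range Bf := by rw [← hBf]; exact mem_insert_of_mem _ htb
      obtain ⟨n, hn⟩ := htr
      by_cases h : y ∈ Bf n
      · exact hts (hn ▸ h)
      · have h2 := hz n
        simp only [h, if_false] at h2
        rcases h2 with h2 | h2
        · exact absurd (show z ∈ Bf n by rw [hn]; exact hzt) h2
        · exact absurd h2 (notMem_empty z)

end QP

namespace QP

theorem QuasiPolish.pi02_subset {Z : Type*} [TopologicalSpace Z] (hZ : QuasiPolish Z)
    {A : Set Z} (hA : IsPi02 A) : QuasiPolish ↥A := by
  obtain ⟨e, he, hrng⟩ := hZ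
  obtain ⟨U, V, hUo, hVo, hAeq⟩ := hA
  -- express U n, V n as preimages of opens
  have hU' : ∀ n, ∃ t : Set (ℕ → Prop), IsOpen t ∧ e ⁻¹' t = U n :=
    fun n => he.isInducing.isOpen_iff.mp (hUo n)
  have hV' : ∀ n, ∃ t : Set (ℕ → Prop), IsOpen t ∧ e ⁻¹' t = V n :=
    fun n => he.isInducing.isOpen_iff.mp (hVo n)
  choose Ut hUt hUtp using hU'
  choose Vt hVt hVtp using hV'
  refine ⟨fun a : ↥A => e a.val, he.comp Topology.IsEmbedding.subtypeVal, ?_⟩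
  have hr : range (fun a : ↥A => e a.val) = e '' A := by
    ext w
    constructor
    · rintro ⟨a, rfl⟩; exact ⟨a.val, a.2, rfl⟩
    · rintro ⟨z, hz, rfl⟩; exact ⟨⟨z, hz⟩, rfl⟩
  rw [hr]
  have himg : e '' A = range e ∩ ⋂ n, ((Ut n)ᶜ ∪ Vt n) := by
    apply subset_antisymm
    · rintro - ⟨a, haA, rfl⟩
      refine ⟨mem_range_self a, ?_⟩
      rw [mem_iInter]
      intro n
      have ha : a ∈ (U n)ᶜ ∪ V n := by
        rw [hAeq] at haA
        exact mem_iInter.mp haA n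
      rcases ha with ha | ha
      · left
        intro hea
        apply ha
        rw [← hUtp n]
        exact hea
      · right
        rw [← hVtp n] at ha
        exact ha
    · rintro w ⟨⟨a, rfl⟩, hw⟩
      refine ⟨a, ?_, rfl⟩
      rw [hAeq, mem_iInter]
      intro n
      have := mem_iInter.mp hw n
      rcases this with h | h
      · left
        intro haU
        apply h
        rw [← hUtp n] at haU
        exact haU
      · right
        rw [← hVtp n]
        exact h
  rw [himg]
  exact isPi02_inter hrng ⟨Ut, Vt, hUt, hVt, rfl⟩

end QP

namespace QP

lemma selSigma_one_le {X : Type*} [TopologicalSpace X] {ξ : Ordinal.{0}} {A : Set X}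
    (h : SelSigma ξ A) : 1 ≤ ξ := by
  cases h with
  | base hU => exact le_refl 1
  | step hξ ζ hζ U V hU hV => exact le_trans (by norm_num) hξ

lemma selSigma_empty {X : Type*} [TopologicalSpace X] {ξ : Ordinal.{0}} (h : 1 ≤ ξ) :
    SelSigma ξ (∅ : Set X) := by
  rcases eq_or_lt_of_le h with h1 | h1
  · rw [← h1]; exact SelSigma.base isOpen_empty
  · have h2 : 2 ≤ ξ := by
      have : (1 : Ordinal) + 1 ≤ ξ := Order.add_one_le_of_lt h1
      simpa [one_add_one_eq_two] using this
    have h3 : (∅ : Set X) = ⋃ _ : ℕ, (∅ : Set X) \ ∅ := by rw [diff_empty, iUnion_const]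
    rw [h3]
    exact SelSigma.step h2 (fun _ => 1) (fun _ => h1) _ _
      (fun _ => SelSigma.base isOpen_empty) (fun _ => SelSigma.base isOpen_empty)

lemma selSigma_mono {X : Type*} [TopologicalSpace X] {ζ ξ : Ordinal.{0}} {A : Set X}
    (h : SelSigma ζ A) (hle : ζ ≤ ξ) : SelSigma ξ A := by
  rcases eq_or_lt_of_le hle with h1 | h1
  · rwa [← h1]
  · have h2 : 2 ≤ ξ := by
      have hζ1 : 1 ≤ ζ := selSigma_one_le h
      have : (1 : Ordinal) + 1 ≤ ξ := Order.add_one_le_of_lt (lt_of_le_of_lt hζ1 h1)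
      simpa [one_add_one_eq_two] using this
    have hAe : A = ⋃ _ : ℕ, A \ ∅ := by rw [diff_empty, iUnion_const]
    rw [hAe]
    exact SelSigma.step h2 (fun _ => ζ) (fun _ => h1) _ _
      (fun _ => h) (fun _ => selSigma_empty (selSigma_one_le h))

lemma selSigma_measurableSet {X : Type*} [TopologicalSpace X] {ξ : Ordinal.{0}} {A : Set X}
    (h : SelSigma ξ A) : @MeasurableSet X (borel X) A := by
  induction h with
  | base hU => exact MeasurableSpace.measurableSet_generateFrom hU
  | step hξ ζ hζ U V hU hV ihU ihV =>
      exact MeasurableSet.iUnion fun n => (ihU n).diff (ihV n)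

lemma selSigma_preimage {X Y : Type*} [TopologicalSpace X] [TopologicalSpace Y]
    {f : X → Y} (hc : Continuous f) {ξ : Ordinal.{0}} {B : Set Y}
    (h : SelSigma ξ B) : SelSigma ξ (f ⁻¹' B) := by
  induction h with
  | base hU => exact SelSigma.base (hU.preimage hc)
  | step hξ ζ hζ U V hU hV ihU ihV =>
      rw [preimage_iUnion]
      simp only [preimage_diff]
      exact SelSigma.step hξ ζ hζ _ _ ihU ihV

/-! ### Baire category lemmas -/

lemma isMeagre_union {Z : Type*} [TopologicalSpace Z] {s t : Set Z}
    (hs : IsMeagre s) (ht : IsMeagre t) : IsMeagre (s ∪ t) := by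
  rw [IsMeagre, compl_union]
  exact Filter.inter_mem hs ht

lemma not_isMeagre_of_isOpen_nonempty {Z : Type*} [TopologicalSpace Z] [BaireSpace Z]
    {O : Set Z} (hO : IsOpen O) (hne : O.Nonempty) : ¬ IsMeagre O := by
  intro h
  have hd : Dense Oᶜ := dense_of_mem_residual h
  obtain ⟨x, hx⟩ := hne
  obtain ⟨z, hz1, hz2⟩ := hd.inter_open_nonempty O hO ⟨x, hx⟩
  exact hz2 hz1

lemma exists_isOpen_of_not_isMeagre {Z : Type*} [TopologicalSpace Z]
    {A : Set Z} (hbm : BaireMeasurableSet A) (h : ¬ IsMeagre A) :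
    ∃ O : Set Z, IsOpen O ∧ O.Nonempty ∧ IsMeagre (O \ A) := by
  obtain ⟨u, huo, heq⟩ := hbm.residualEq_isOpen
  have hsd : IsMeagre {x | ¬ (x ∈ A ↔ x ∈ u)} := by
    rw [IsMeagre]
    have : {x | ¬ (x ∈ A ↔ x ∈ u)}ᶜ = {x | x ∈ A ↔ x ∈ u} := by
      ext x; simp
    rw [this]
    exact Filter.eventuallyEq_set.mp heq
  rcases eq_empty_or_nonempty u with hu | hu
  · exfalso
    apply h
    apply hsd.mono
    intro x hx
    simp only [mem_setOf_eq, hu, mem_empty_iff_false, iff_false]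
    intro hc
    exact hc hx
  · refine ⟨u, huo, hu, hsd.mono ?_⟩
    intro x hx
    simp only [mem_setOf_eq]
    intro hiff
    exact hx.2 (hiff.mpr hx.1)

lemma not_isMeagre_of_diff_isMeagre {Z : Type*} [TopologicalSpace Z] [BaireSpace Z]
    {O A : Set Z} (hO : IsOpen O) (hne : O.Nonempty) (h : IsMeagre (O \ A)) :
    ¬ IsMeagre A := by
  intro hA
  apply not_isMeagre_of_isOpen_nonempty hO hne
  exact (isMeagre_union h hA).mono fun x hx => by
    by_cases hxA : x ∈ A
    · exact Or.inr hxA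
    · exact Or.inl ⟨hx, hxA⟩

end QP

namespace QP

variable {X Y : Type*} [TopologicalSpace X] [TopologicalSpace Y]

/-- The localized Baire category quantifier: `y` is in this set iff `A ∩ W` is nonmeager
in the fiber over `y`. -/
def EQ (f : X → Y) (A W : Set X) : Set Y :=
  {y : Y | ¬ IsMeagre (Subtype.val ⁻¹' (A ∩ W) : Set ↥(f ⁻¹' {y}))}

/-- The main lemma: the Baire category quantifier preserves the Selivanov classes. -/
lemma selSigma_EQ (f : X → Y) (hc : Continuous f) (ho : IsOpenMap f)
    (hfib : ∀ y : Y, BaireSpace ↥(f ⁻¹' ({y} : Set Y)))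
    (Wb : ℕ → Set X) (hWo : ∀ k, IsOpen (Wb k))
    (hWb : ∀ G : Set X, IsOpen G → ∀ x ∈ G, ∃ k, x ∈ Wb k ∧ Wb k ⊆ G)
    {ξ : Ordinal.{0}} {A : Set X} (h : SelSigma ξ A) :
    ∀ W : Set X, IsOpen W → SelSigma ξ (EQ f A W) := by
  induction h with
  | @base U hU =>
      intro W hW
      have heq : EQ f U W = f '' (U ∩ W) := by
        ext y
        constructor
        · intro hy
          by_contra him
          apply hy
          have he : (Subtype.val ⁻¹' (U ∩ W) : Set ↥(f ⁻¹' ({y} : Set Y))) = ∅ := by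
            ext x
            simp only [mem_preimage, mem_empty_iff_false, iff_false]
            intro hx
            exact him ⟨x.val, hx, x.2⟩
          rw [he]
          exact IsMeagre.empty
        · rintro ⟨x, hx, hfx⟩
          haveI := hfib y
          apply not_isMeagre_of_isOpen_nonempty
            ((hU.inter hW).preimage continuous_subtype_val)
          exact ⟨⟨x, hfx⟩, hx⟩
      rw [heq]
      exact SelSigma.base (ho _ (hU.inter hW))
  | @step ξ hξ ζ hζ U V hU hV ihU ihV =>
      intro W hW
      classical
      letI mX : MeasurableSpace X := borel X
      haveI : BorelSpace X := ⟨rfl⟩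
      have hUm : ∀ n, MeasurableSet (U n) := fun n => selSigma_measurableSet (hU n)
      have hVm : ∀ n, MeasurableSet (V n) := fun n => selSigma_measurableSet (hV n)
      have claim : EQ f (⋃ n, U n \ V n) W
          = ⋃ p : ℕ × ℕ, (EQ f (U p.1) (Wb p.2 ∩ W) \ EQ f (V p.1) (Wb p.2 ∩ W)) := by
        ext y
        haveI := hfib y
        letI : MeasurableSpace ↥(f ⁻¹' ({y} : Set Y)) := borel ↥(f ⁻¹' ({y} : Set Y))
        haveI : BorelSpace ↥(f ⁻¹' ({y} : Set Y)) := ⟨rfl⟩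
        have hvalm : Measurable (Subtype.val : ↥(f ⁻¹' ({y} : Set Y)) → X) :=
          continuous_subtype_val.measurable
        have hbmU : ∀ n,
            BaireMeasurableSet (Subtype.val ⁻¹' U n : Set ↥(f ⁻¹' ({y} : Set Y))) :=
          fun n => ((hUm n).preimage hvalm).baireMeasurableSet
        have hbmV : ∀ n,
            BaireMeasurableSet (Subtype.val ⁻¹' V n : Set ↥(f ⁻¹' ({y} : Set Y))) :=
          fun n => ((hVm n).preimage hvalm).baireMeasurableSet
        simp only [EQ, mem_setOf_eq, mem_iUnion, mem_diff]
        constructor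
        · intro hy
          have hsplit : ∃ n, ¬ IsMeagre
              (Subtype.val ⁻¹' ((U n \ V n) ∩ W) : Set ↥(f ⁻¹' ({y} : Set Y))) := by
            by_contra hcon
            push_neg at hcon
            apply hy
            have he : (Subtype.val ⁻¹' ((⋃ n, U n \ V n) ∩ W)
                  : Set ↥(f ⁻¹' ({y} : Set Y)))
                = ⋃ n, (Subtype.val ⁻¹' ((U n \ V n) ∩ W)
                  : Set ↥(f ⁻¹' ({y} : Set Y))) := by
              rw [iUnion_inter, preimage_iUnion]
            rw [he]
            exact isMeagre_iUnion hcon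
          obtain ⟨n, hn⟩ := hsplit
          set A' : Set ↥(f ⁻¹' ({y} : Set Y)) := Subtype.val ⁻¹' ((U n \ V n) ∩ W)
            with hA'
          have hbmA' : BaireMeasurableSet A' := by
            rw [hA', preimage_inter, preimage_diff]
            exact (((hbmU n).diff (hbmV n)).inter
              ((hW.preimage continuous_subtype_val).baireMeasurableSet))
          obtain ⟨O, hOo, hOne, hOmeag⟩ := exists_isOpen_of_not_isMeagre hbmA' hn
          obtain ⟨G, hGo, hGp⟩ := (IsInducing.subtypeVal.isOpen_iff).mp hOo
          obtain ⟨x₀, hx₀⟩ := hOne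
          have hx₀G : x₀.val ∈ G := by rw [← hGp] at hx₀; exact hx₀
          obtain ⟨k, hxk, hkG⟩ := hWb G hGo x₀.val hx₀G
          have hWbO : (Subtype.val ⁻¹' Wb k : Set ↥(f ⁻¹' ({y} : Set Y))) ⊆ O := by
            rw [← hGp]; exact fun z hz => hkG hz
          have hWbne : (Subtype.val ⁻¹' Wb k : Set ↥(f ⁻¹' ({y} : Set Y))).Nonempty :=
            ⟨x₀, hxk⟩
          refine ⟨⟨n, k⟩, ?_, ?_⟩
          · apply not_isMeagre_of_diff_isMeagre
              ((hWo k).preimage continuous_subtype_val) hWbne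
            apply hOmeag.mono
            intro z hz
            refine ⟨hWbO hz.1, fun hzA' => hz.2 ?_⟩
            have h3 : (z : X) ∈ (U n \ V n) ∩ W := hzA'
            exact show (z : X) ∈ U n ∩ (Wb k ∩ W) from ⟨h3.1.1, hz.1, h3.2⟩
          · refine not_not.mpr (hOmeag.mono ?_)
            intro z hz
            have h3 : (z : X) ∈ V n ∩ (Wb k ∩ W) := hz
            refine ⟨hWbO h3.2.1, fun hzA' => ?_⟩
            have h4 : (z : X) ∈ (U n \ V n) ∩ W := hzA'
            exact h4.1.2 h3.1
        · rintro ⟨⟨n, k⟩, hn, hk⟩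
          have hVmeag : IsMeagre
              (Subtype.val ⁻¹' (V n ∩ (Wb k ∩ W)) : Set ↥(f ⁻¹' ({y} : Set Y))) :=
            not_not.mp hk
          set A'' : Set ↥(f ⁻¹' ({y} : Set Y)) := Subtype.val ⁻¹' (U n ∩ (Wb k ∩ W))
            with hA''
          have hbmA'' : BaireMeasurableSet A'' := by
            rw [hA'', preimage_inter]
            exact ((hbmU n).inter
              ((((hWo k).inter hW).preimage continuous_subtype_val).baireMeasurableSet))
          obtain ⟨O, hOo, hOne, hOmeag⟩ := exists_isOpen_of_not_isMeagre hbmA'' hn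
          have hkey : ¬ IsMeagre
              (Subtype.val ⁻¹' ((U n \ V n) ∩ W) : Set ↥(f ⁻¹' ({y} : Set Y))) := by
            apply not_isMeagre_of_diff_isMeagre hOo hOne
            apply (isMeagre_union hOmeag hVmeag).mono
            intro z hz
            by_cases hzA : z ∈ A''
            · right
              have h3 : (z : X) ∈ U n ∩ (Wb k ∩ W) := hzA
              have hzV : (z : X) ∈ V n := by
                by_contra hzV
                exact hz.2 (show (z : X) ∈ (U n \ V n) ∩ W from ⟨⟨h3.1, hzV⟩, h3.2.2⟩)
              exact show (z : X) ∈ V n ∩ (Wb k ∩ W) from ⟨hzV, h3.2⟩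
            · exact Or.inl ⟨hz.1, hzA⟩
          intro hmeag
          exact hkey (hmeag.mono (preimage_mono
            (inter_subset_inter (subset_iUnion (fun m => U m \ V m) n) (Subset.refl W))))
      rw [claim]
      set P : ℕ ≃ ℕ × ℕ := (Denumerable.eqv (ℕ × ℕ)).symm with hP
      rw [← P.surjective.iUnion_comp
        (fun p => (EQ f (U p.1) (Wb p.2 ∩ W) \ EQ f (V p.1) (Wb p.2 ∩ W)))]
      exact SelSigma.step hξ (fun m => ζ (P m).1) (fun m => hζ (P m).1) _ _
        (fun m => ihU (P m).1 _ ((hWo (P m).2).inter hW))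
        (fun m => ihV (P m).1 _ ((hWo (P m).2).inter hW))

end QP

namespace QP

/-- Enumerated basis for a second-countable space. -/
lemma exists_basis_enum (X : Type*) [TopologicalSpace X] [SecondCountableTopology X] :
    ∃ Wb : ℕ → Set X, (∀ k, IsOpen (Wb k)) ∧
      (∀ G : Set X, IsOpen G → ∀ x ∈ G, ∃ k, x ∈ Wb k ∧ Wb k ⊆ G) := by
  obtain ⟨b, hbc, -, hbasis⟩ := exists_countable_basis X
  obtain ⟨Wb, hWb⟩ := (hbc.insert ∅).exists_eq_range (insert_nonempty _ _)
  refine ⟨Wb, ?_, ?_⟩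
  · intro k
    have : Wb k ∈ insert ∅ b := hWb ▸ mem_range_self k
    rcases this with h | h
    · rw [h]; exact isOpen_empty
    · exact hbasis.isOpen h
  · intro G hG x hx
    obtain ⟨t, htb, hxt, htG⟩ := hbasis.exists_subset_of_mem_open hx hG
    have : t ∈ range Wb := by rw [← hWb]; exact mem_insert_of_mem _ htb
    obtain ⟨k, hk⟩ := this
    exact ⟨k, by rw [hk]; exact hxt, by rw [hk]; exact htG⟩

end QP

/-- For a continuous open surjection `f : X → Y` between
quasi-Polish spaces and any countable ordinal `ξ ≥ 1`, a set `B ⊆ Y` is `Σ⁰_ξ`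
iff `f⁻¹(B)` is `Σ⁰_ξ`. -/
theorem stmt_7 {X Y : Type*} [TopologicalSpace X] [TopologicalSpace Y]
    (hX : QuasiPolish X) (hY : QuasiPolish Y)
    (f : X → Y) (hc : Continuous f) (ho : IsOpenMap f) (hs : Function.Surjective f)
    (ξ : Ordinal.{0}) (hξ1 : 1 ≤ ξ) (hξc : ξ.card ≤ Cardinal.aleph0)
    (B : Set Y) :
    SelSigma ξ B ↔ SelSigma ξ (f ⁻¹' B) := by
  constructor
  · exact fun h => QP.selSigma_preimage hc h
  · intro h
    -- instances coming from quasi-Polishness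
    haveI : SecondCountableTopology X := QP.QuasiPolish.secondCountable hX
    haveI : SecondCountableTopology Y := QP.QuasiPolish.secondCountable hY
    haveI : T0Space Y := QP.QuasiPolish.t0 hY
    obtain ⟨Wb, hWo, hWb⟩ := QP.exists_basis_enum X
    have hfib : ∀ y : Y, BaireSpace ↥(f ⁻¹' ({y} : Set Y)) := by
      intro y
      have h1 : IsPi02 ({y} : Set Y) := QP.isPi02_singleton y
      have h2 : IsPi02 (f ⁻¹' ({y} : Set Y)) := QP.isPi02_preimage hc h1
      exact QP.QuasiPolish.baireSpace (QP.QuasiPolish.pi02_subset hX h2)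
    have hmain := QP.selSigma_EQ f hc ho hfib Wb hWo hWb h univ isOpen_univ
    have hEQ : QP.EQ f (f ⁻¹' B) univ = B := by
      ext y
      simp only [QP.EQ, mem_setOf_eq]
      constructor
      · intro hy
        by_contra hyB
        apply hy
        have he : (Subtype.val ⁻¹' (f ⁻¹' B ∩ univ) : Set ↥(f ⁻¹' ({y} : Set Y))) = ∅ := by
          ext x
          simp only [mem_preimage, mem_empty_iff_false, iff_false, inter_univ]
          intro hx
          have : f x.val = y := x.2
          rw [this] at hx
          exact hyB hx
        rw [he]
        exact IsMeagre.empty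
      · intro hyB
        haveI := hfib y
        have he : (Subtype.val ⁻¹' (f ⁻¹' B ∩ univ) : Set ↥(f ⁻¹' ({y} : Set Y))) = univ := by
          ext x
          simp only [mem_preimage, mem_univ, iff_true, inter_univ]
          have : f x.val = y := x.2
          rw [this]
          exact hyB
        rw [he]
        apply QP.not_isMeagre_of_isOpen_nonempty isOpen_univ
        obtain ⟨x, hx⟩ := hs y
        exact ⟨⟨x, hx⟩, mem_univ _⟩
    rwa [hEQ] at hmain
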